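/- arXiv:2006.07904 — 4 statements merged into one kernel-verified Lean document; each statement's English description precedes it below -/
import Mathlib

section
/- Bounded second moment of stationary distributions: under Assumptions A1, A2 and the moment part of A3 (E[ξ_1(θ)] = 0 and E[‖ξ_1(θ)‖²] ≤ L_ξ(1+‖θ‖²) for all θ), for any step size η with 0 < η < (α − √(max(α² − (3L² + L_ξ), 0)))/(3L² + L_ξ), every stationary probability measure π of the SGD chain with ∫‖θ‖² dπ(θ) < ∞ satisfies ∫‖θ‖² dπ(θ) ≤ (9ηL² + ηL_ξ + 2β)/(2α − η(3L² + L_ξ)) ≤ 3 + 2β/α. -/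
open MeasureTheory ProbabilityTheory Real NNReal ENNReal Filter Topology BoundedContinuousFunction

noncomputable section

/-- The constant step size SGD iterates
`θ_{k+1} = θ_k - η (∇f(θ_k) + ξ_{k+1}(θ_k))`. -/
def sgdIter {d : ℕ} {Ω : Type*} (η : ℝ)
    (f' : EuclideanSpace ℝ (Fin d) → EuclideanSpace ℝ (Fin d))
    (ξ : ℕ → Ω → EuclideanSpace ℝ (Fin d) → EuclideanSpace ℝ (Fin d))
    (θ0 : Ω → EuclideanSpace ℝ (Fin d)) : ℕ → Ω → EuclideanSpace ℝ (Fin d)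
  | 0 => θ0
  | k + 1 => fun ω =>
      sgdIter η f' ξ θ0 k ω -
        η • (f' (sgdIter η f' ξ θ0 k ω) + ξ (k + 1) ω (sgdIter η f' ξ θ0 k ω))

/-- A Borel probability measure `μ` is stationary for the SGD chain: if `θ₀ ∼ μ` is independent
of the noise field `ξ₁`, then `θ₁ = θ₀ - η (∇f(θ₀) + ξ₁(θ₀))` again has law `μ`. -/
def IsStationarySGD {d : ℕ} {Ω : Type*} [MeasurableSpace Ω] (P : Measure Ω) (η : ℝ)
    (f' : EuclideanSpace ℝ (Fin d) → EuclideanSpace ℝ (Fin d))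
    (ξ1 : Ω → EuclideanSpace ℝ (Fin d) → EuclideanSpace ℝ (Fin d))
    (μ : Measure (EuclideanSpace ℝ (Fin d))) : Prop :=
  Measure.map (fun q : Ω × EuclideanSpace ℝ (Fin d) => q.2 - η • (f' q.2 + ξ1 q.1 q.2))
    (P.prod μ) = μ

/-- The density part of Assumption A3: the law of `ξ₁(θ)` has an absolutely continuous component
with Lebesgue density `p θ`, jointly measurable, and uniformly bounded below on bounded sets. -/
def NoiseDensityLB {d : ℕ} {Ω : Type*} [MeasurableSpace Ω] (P : Measure Ω)
    (ξ1 : Ω → EuclideanSpace ℝ (Fin d) → EuclideanSpace ℝ (Fin d))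
    (p : EuclideanSpace ℝ (Fin d) → EuclideanSpace ℝ (Fin d) → ℝ) : Prop :=
  Measurable (Function.uncurry p) ∧ (∀ θ t, 0 ≤ p θ t) ∧
    (∀ θ, (volume.withDensity fun t => ENNReal.ofReal (p θ t)) ≤
      Measure.map (fun ω => ξ1 ω θ) P) ∧
    (∀ C K : Set (EuclideanSpace ℝ (Fin d)), Bornology.IsBounded C → Bornology.IsBounded K →
      ∃ ε > (0 : ℝ), ∀ θ ∈ C, ∀ t ∈ K, ε ≤ p θ t)

set_option maxHeartbeats 1000000 in
/-- Corollary A.2: bound on the second moment of any stationary distribution of the constant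
step size SGD chain. -/
theorem sgd_stationary_second_moment_bound
    {d : ℕ} (hd : 1 ≤ d) {Ω : Type} [MeasurableSpace Ω] (P : Measure Ω) [IsProbabilityMeasure P]
    (f : EuclideanSpace ℝ (Fin d) → ℝ)
    (f' : EuclideanSpace ℝ (Fin d) → EuclideanSpace ℝ (Fin d))
    (hf : ∀ θ, HasGradientAt f (f' θ) θ)
    (ξ : ℕ → Ω → EuclideanSpace ℝ (Fin d) → EuclideanSpace ℝ (Fin d))
    (hξmeas : ∀ k, Measurable (Function.uncurry (ξ k)))
    (hξindep : iIndepFun (fun k ω => ξ (k + 1) ω) P)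
    (hξident : ∀ k, Measure.map (fun ω => ξ (k + 1) ω) P = Measure.map (fun ω => ξ 1 ω) P)
    (L : ℝ) (hL : 0 ≤ L)
    (hA1 : ∀ θ, ‖f' θ‖ ≤ L * (1 + ‖θ‖))
    (α β : ℝ) (hα : 0 < α) (hβ : 0 < β)
    (hA2 : ∀ θ, α * ‖θ‖ ^ 2 - β ≤ (inner ℝ θ (f' θ) : ℝ))
    (Lξ : ℝ) (hLξ : 0 < Lξ)
    (hmean : ∀ θ, ∫ ω, ξ 1 ω θ ∂P = 0)
    (hmom2 : ∀ θ, ∫ ω, ‖ξ 1 ω θ‖ ^ 2 ∂P ≤ Lξ * (1 + ‖θ‖ ^ 2))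
    (η : ℝ) (hη0 : 0 < η)
    (hη : η < (α - Real.sqrt (max (α ^ 2 - (3 * L ^ 2 + Lξ)) 0)) / (3 * L ^ 2 + Lξ))
    (μ : Measure (EuclideanSpace ℝ (Fin d)))
    (hμ : IsProbabilityMeasure μ) (hμstat : IsStationarySGD P η f' (ξ 1) μ)
    (hμmom : Integrable (fun θ => ‖θ‖ ^ 2) μ) :
    (∫ θ, ‖θ‖ ^ 2 ∂μ) ≤ (9 * η * L ^ 2 + η * Lξ + 2 * β) / (2 * α - η * (3 * L ^ 2 + Lξ)) ∧
    (9 * η * L ^ 2 + η * Lξ + 2 * β) / (2 * α - η * (3 * L ^ 2 + Lξ)) ≤ 3 + 2 * β / α := by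
  have hS : (0:ℝ) < 3 * L ^ 2 + Lξ := by positivity
  have hηS : η * (3 * L ^ 2 + Lξ) < α := by
    have h1 := (lt_div_iff₀ hS).mp hη
    have h2 := Real.sqrt_nonneg (max (α ^ 2 - (3 * L ^ 2 + Lξ)) 0)
    linarith
  have hD : (0:ℝ) < 2 * α - η * (3 * L ^ 2 + Lξ) := by linarith
  constructor
  · -- main bound
    set ν : Measure (Ω × EuclideanSpace ℝ (Fin d)) := P.prod μ with hν
    have hf'meas : Measurable f' := by
      have heq : f' = fun θ => (InnerProductSpace.toDual ℝ (EuclideanSpace ℝ (Fin d))).symm (fderiv ℝ f θ) := by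
        funext θ
        have h1 : fderiv ℝ f θ = InnerProductSpace.toDual ℝ _ (f' θ) := (hf θ).hasFDerivAt.fderiv
        rw [h1, LinearIsometryEquiv.symm_apply_apply]
      rw [heq]
      exact ((InnerProductSpace.toDual ℝ _).symm.continuous.measurable).comp (measurable_fderiv ℝ f)
    set M := ∫ θ, ‖θ‖ ^ 2 ∂μ with hMdef
    set a : EuclideanSpace ℝ (Fin d) → EuclideanSpace ℝ (Fin d) := fun θ => θ - η • f' θ with ha
    set b : Ω × EuclideanSpace ℝ (Fin d) → EuclideanSpace ℝ (Fin d) := fun q => ξ 1 q.1 q.2 with hb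
    set g : Ω × EuclideanSpace ℝ (Fin d) → EuclideanSpace ℝ (Fin d) := fun q => q.2 - η • (f' q.2 + ξ 1 q.1 q.2) with hg
    have hbmeas : Measurable b := hξmeas 1
    have hameas : Measurable a := measurable_id.sub (hf'meas.const_smul η)
    have hgmeas : Measurable g :=
      measurable_snd.sub (((hf'meas.comp measurable_snd).add hbmeas).const_smul η)
    have hgab : ∀ q : Ω × EuclideanSpace ℝ (Fin d), g q = a q.2 - η • b q := by
      intro q; simp only [hg, ha, hb, smul_add]; abel
    have hstat : Measure.map g ν = μ := hμstat
    have hsnd : Measure.map Prod.snd ν = μ := by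
      rw [hν]; simp [Measure.map_snd_prod]
    -- integrability of θ-only functions over the product
    have hintsnd : ∀ (F : EuclideanSpace ℝ (Fin d) → ℝ), Integrable F μ → Integrable (fun q : Ω × EuclideanSpace ℝ (Fin d) => F q.2) ν := by
      intro F hF
      rw [← hsnd] at hF
      have := (integrable_map_measure hF.aestronglyMeasurable measurable_snd.aemeasurable).mp hF
      exact this
    have hintegralsnd : ∀ (F : EuclideanSpace ℝ (Fin d) → ℝ), Integrable F μ →
        ∫ q, F q.2 ∂ν = ∫ θ, F θ ∂μ := by
      intro F hF
      conv_rhs => rw [← hsnd]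
      rw [integral_map measurable_snd.aemeasurable (by rw [hsnd]; exact hF.aestronglyMeasurable)]
    -- ‖g‖² is integrable with integral M
    have hnormsq : AEStronglyMeasurable (fun θ : EuclideanSpace ℝ (Fin d) => ‖θ‖ ^ 2) (Measure.map g ν) := by
      rw [hstat]; exact hμmom.aestronglyMeasurable
    have hg2int : Integrable (fun q => ‖g q‖ ^ 2) ν := by
      have h := (integrable_map_measure hnormsq hgmeas.aemeasurable).mp (by rwa [hstat])
      exact h
    have hg2eq : ∫ q, ‖g q‖ ^ 2 ∂ν = M := by
      rw [hMdef, ← hstat, integral_map hgmeas.aemeasurable hnormsq]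
    -- integrability of ‖a‖² over μ and ν
    have haμ : Integrable (fun θ => ‖a θ‖ ^ 2) μ := by
      have hdom : Integrable (fun θ : EuclideanSpace ℝ (Fin d) =>
          (2 * (η * L) ^ 2 + 2 * (1 + η * L) ^ 2) * (1 + ‖θ‖ ^ 2)) μ :=
        ((integrable_const (1:ℝ)).add hμmom).const_mul _
      refine hdom.mono' ((hameas.norm.pow_const 2).aestronglyMeasurable) ?_
      filter_upwards with θ
      have h1 : ‖a θ‖ ≤ η * L + (1 + η * L) * ‖θ‖ := by
        have h2 : ‖a θ‖ ≤ ‖θ‖ + ‖η • f' θ‖ := norm_sub_le _ _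
        have h3 : ‖η • f' θ‖ = η * ‖f' θ‖ := by
          rw [norm_smul, Real.norm_of_nonneg hη0.le]
        have h4 := hA1 θ
        have h5 : η * ‖f' θ‖ ≤ η * (L * (1 + ‖θ‖)) := by
          exact mul_le_mul_of_nonneg_left h4 hη0.le
        nlinarith
      rw [Real.norm_of_nonneg (by positivity)]
      nlinarith [norm_nonneg (a θ), norm_nonneg θ, sq_nonneg (η * L - (1 + η * L) * ‖θ‖),
        mul_nonneg (mul_nonneg hη0.le hL) (norm_nonneg θ)]
    have haν : Integrable (fun q : Ω × EuclideanSpace ℝ (Fin d) => ‖a q.2‖ ^ 2) ν := hintsnd _ haμ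
    -- integrability of ‖b‖² over ν
    have hb2int : Integrable (fun q => ‖b q‖ ^ 2) ν := by
      have hdom : Integrable (fun q : Ω × EuclideanSpace ℝ (Fin d) => 2 / η ^ 2 * (‖a q.2‖ ^ 2 + ‖g q‖ ^ 2)) ν :=
        (haν.add hg2int).const_mul _
      refine hdom.mono' ((hbmeas.norm.pow_const 2).aestronglyMeasurable) ?_
      filter_upwards with q
      have h1 : η * ‖b q‖ = ‖a q.2 - g q‖ := by
        rw [hgab q]
        rw [show a q.2 - (a q.2 - η • b q) = η • b q by abel, norm_smul,
          Real.norm_of_nonneg hη0.le]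
      have h2 : ‖a q.2 - g q‖ ≤ ‖a q.2‖ + ‖g q‖ := norm_sub_le _ _
      rw [Real.norm_of_nonneg (by positivity)]
      have h3 : (η * ‖b q‖) ^ 2 ≤ (‖a q.2‖ + ‖g q‖) ^ 2 := by
        have := h1 ▸ h2
        nlinarith [norm_nonneg (b q), mul_nonneg hη0.le (norm_nonneg (b q))]
      have h4 : η ^ 2 * ‖b q‖ ^ 2 ≤ 2 * (‖a q.2‖ ^ 2 + ‖g q‖ ^ 2) := by
        nlinarith [sq_nonneg (‖a q.2‖ - ‖g q‖)]
      rw [div_mul_eq_mul_div, le_div_iff₀ (by positivity)]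
      nlinarith
    -- integrability of the cross term
    have hcross : Integrable (fun q : Ω × EuclideanSpace ℝ (Fin d) => (inner ℝ (a q.2) (b q) : ℝ)) ν := by
      have hdom : Integrable (fun q : Ω × EuclideanSpace ℝ (Fin d) => (‖a q.2‖ ^ 2 + ‖b q‖ ^ 2) / 2) ν :=
        (haν.add hb2int).div_const 2
      refine hdom.mono' (((hameas.comp measurable_snd).inner hbmeas).aestronglyMeasurable) ?_
      filter_upwards with q
      have h1 := abs_real_inner_le_norm (a q.2) (b q)
      have h2 : ‖a q.2‖ * ‖b q‖ ≤ (‖a q.2‖ ^ 2 + ‖b q‖ ^ 2) / 2 := by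
        nlinarith [sq_nonneg (‖a q.2‖ - ‖b q‖)]
      calc ‖(inner ℝ (a q.2) (b q) : ℝ)‖ = |(inner ℝ (a q.2) (b q) : ℝ)| := rfl
        _ ≤ ‖a q.2‖ * ‖b q‖ := h1
        _ ≤ _ := h2
    -- pointwise expansion
    have hexp : ∀ q : Ω × EuclideanSpace ℝ (Fin d), ‖g q‖ ^ 2
        = ‖a q.2‖ ^ 2 - 2 * η * (inner ℝ (a q.2) (b q) : ℝ) + η ^ 2 * ‖b q‖ ^ 2 := by
      intro q
      rw [hgab q, norm_sub_sq_real, real_inner_smul_right, norm_smul,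
        Real.norm_of_nonneg hη0.le]
      ring
    -- split the integral
    have hsplit : M = (∫ θ, ‖a θ‖ ^ 2 ∂μ)
        - 2 * η * (∫ q, (inner ℝ (a q.2) (b q) : ℝ) ∂ν) + η ^ 2 * (∫ q, ‖b q‖ ^ 2 ∂ν) := by
      have h0 : ∫ q, ‖g q‖ ^ 2 ∂ν
          = ∫ q, (‖a q.2‖ ^ 2 - 2 * η * (inner ℝ (a q.2) (b q) : ℝ) + η ^ 2 * ‖b q‖ ^ 2) ∂ν := by
        exact integral_congr_ae (Filter.Eventually.of_forall hexp)
      rw [← hg2eq, h0, integral_add (by exact (haν.sub (hcross.const_mul _))) (hb2int.const_mul _),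
        integral_sub haν (hcross.const_mul _), integral_const_mul, integral_const_mul,
        hintegralsnd _ haμ]
    -- cross term vanishes
    have hbae : ∀ᵐ θ ∂μ, Integrable (fun ω => ξ 1 ω θ) P := by
      have h1 : ∀ᵐ θ ∂μ, Integrable (fun ω => ‖b (ω, θ)‖ ^ 2) P := hb2int.prod_left_ae
      filter_upwards [h1] with θ hθ
      have hdom : Integrable (fun ω : Ω => (1 + ‖ξ 1 ω θ‖ ^ 2) / 2) P :=
        ((integrable_const (1:ℝ)).add hθ).div_const 2
      refine hdom.mono' ?_ ?_
      · exact (hbmeas.comp (measurable_id.prodMk measurable_const)).aestronglyMeasurable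
      · filter_upwards with ω
        have := sq_nonneg (1 - ‖ξ 1 ω θ‖)
        have h2 := norm_nonneg (ξ 1 ω θ)
        nlinarith
    have hzero : ∫ q, (inner ℝ (a q.2) (b q) : ℝ) ∂ν = 0 := by
      rw [hν, integral_prod_symm _ hcross]
      have : ∀ᵐ θ ∂μ, ∫ ω, (inner ℝ (a θ) (ξ 1 ω θ) : ℝ) ∂P = 0 := by
        filter_upwards [hbae] with θ hθ
        rw [integral_inner hθ (a θ), hmean θ, inner_zero_right]
      calc ∫ θ, ∫ ω, (inner ℝ (a θ) (b (ω, θ)) : ℝ) ∂P ∂μ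
          = ∫ θ, (0:ℝ) ∂μ := integral_congr_ae this
        _ = 0 := integral_zero _ _
    -- bound on ∫ ‖a‖²
    have habound : ∫ θ, ‖a θ‖ ^ 2 ∂μ
        ≤ (2 * η * β + 9 * η ^ 2 * L ^ 2) + (1 - 2 * η * α + 3 * η ^ 2 * L ^ 2) * M := by
      have hφint : Integrable (fun θ : EuclideanSpace ℝ (Fin d) =>
          (2 * η * β + 9 * η ^ 2 * L ^ 2) + (1 - 2 * η * α + 3 * η ^ 2 * L ^ 2) * ‖θ‖ ^ 2) μ :=
        (integrable_const _).add (hμmom.const_mul _)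
      have hpt : ∀ θ : EuclideanSpace ℝ (Fin d), ‖a θ‖ ^ 2
          ≤ (2 * η * β + 9 * η ^ 2 * L ^ 2) + (1 - 2 * η * α + 3 * η ^ 2 * L ^ 2) * ‖θ‖ ^ 2 := by
        intro θ
        have h1 : ‖a θ‖ ^ 2 = ‖θ‖ ^ 2 - 2 * η * (inner ℝ θ (f' θ) : ℝ) + η ^ 2 * ‖f' θ‖ ^ 2 := by
          rw [ha]
          rw [norm_sub_sq_real, real_inner_smul_right, norm_smul, Real.norm_of_nonneg hη0.le]
          ring
        have h2 := hA2 θ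
        have h3 : ‖f' θ‖ ^ 2 ≤ (L * (1 + ‖θ‖)) ^ 2 := by
          have := hA1 θ
          nlinarith [norm_nonneg (f' θ), norm_nonneg θ]
        rw [h1]
        nlinarith [sq_nonneg η, sq_nonneg L, sq_nonneg (1 - ‖θ‖), norm_nonneg θ,
          mul_le_mul_of_nonneg_left h2 (by positivity : (0:ℝ) ≤ 2 * η),
          mul_le_mul_of_nonneg_left h3 (sq_nonneg η),
          mul_nonneg (mul_nonneg (sq_nonneg η) (sq_nonneg L)) (sq_nonneg (1 - ‖θ‖))]
      calc ∫ θ, ‖a θ‖ ^ 2 ∂μ ≤ ∫ θ, ((2 * η * β + 9 * η ^ 2 * L ^ 2)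
            + (1 - 2 * η * α + 3 * η ^ 2 * L ^ 2) * ‖θ‖ ^ 2) ∂μ :=
          integral_mono haμ hφint hpt
        _ = (2 * η * β + 9 * η ^ 2 * L ^ 2) + (1 - 2 * η * α + 3 * η ^ 2 * L ^ 2) * M := by
          rw [integral_add (integrable_const _) (hμmom.const_mul _), integral_const,
            integral_const_mul, probReal_univ]
          simp [hMdef]
    -- bound on ∫ ‖b‖²
    have hbbound : ∫ q, ‖b q‖ ^ 2 ∂ν ≤ Lξ * (1 + M) := by
      have h1 : ∫ q, ‖b q‖ ^ 2 ∂ν = ∫ θ, ∫ ω, ‖b (ω, θ)‖ ^ 2 ∂P ∂μ := by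
        rw [hν]; exact integral_prod_symm _ hb2int
      have h2 : Integrable (fun θ => ∫ ω, ‖b (ω, θ)‖ ^ 2 ∂P) μ := by
        rw [hν] at hb2int
        exact hb2int.integral_prod_right
      have h3 : Integrable (fun θ : EuclideanSpace ℝ (Fin d) => Lξ * (1 + ‖θ‖ ^ 2)) μ :=
        ((integrable_const (1:ℝ)).add hμmom).const_mul _
      rw [h1]
      calc ∫ θ, ∫ ω, ‖b (ω, θ)‖ ^ 2 ∂P ∂μ ≤ ∫ θ, Lξ * (1 + ‖θ‖ ^ 2) ∂μ :=
          integral_mono h2 h3 fun θ => hmom2 θ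
        _ = Lξ * (1 + M) := by
          rw [integral_const_mul, integral_add (integrable_const _) hμmom, integral_const,
            probReal_univ]
          simp [hMdef]
    -- combine
    have hkey : M * (2 * α - η * (3 * L ^ 2 + Lξ)) ≤ 9 * η * L ^ 2 + η * Lξ + 2 * β := by
      rw [hzero] at hsplit
      have h1 : η ^ 2 * (∫ q, ‖b q‖ ^ 2 ∂ν) ≤ η ^ 2 * (Lξ * (1 + M)) :=
        mul_le_mul_of_nonneg_left hbbound (sq_nonneg η)
      have h2 : M ≤ (2 * η * β + 9 * η ^ 2 * L ^ 2) + (1 - 2 * η * α + 3 * η ^ 2 * L ^ 2) * M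
          + η ^ 2 * (Lξ * (1 + M)) := by linarith
      have h3 : η * (M * (2 * α - η * (3 * L ^ 2 + Lξ)))
          ≤ η * (9 * η * L ^ 2 + η * Lξ + 2 * β) := by nlinarith
      exact le_of_mul_le_mul_left h3 hη0
    rw [le_div_iff₀ hD]
    exact hkey
  · -- algebraic bound
    rw [div_le_iff₀ hD, ← mul_le_mul_iff_right₀ hα]
    have hrhs : α * ((3 + 2 * β / α) * (2 * α - η * (3 * L ^ 2 + Lξ)))
        = (3 * α + 2 * β) * (2 * α - η * (3 * L ^ 2 + Lξ)) := by
      field_simp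
    rw [hrhs]
    nlinarith [mul_nonneg (sub_nonneg.2 hηS.le) (by positivity : (0:ℝ) ≤ 3 * α + β),
      mul_nonneg hη0.le hLξ.le, mul_pos hα hβ, sq_nonneg L,
      mul_nonneg (mul_nonneg hη0.le hLξ.le) hβ.le,
      mul_nonneg (mul_nonneg hη0.le (sq_nonneg L)) hα.le]
end
end

section
/- Minorization: under Assumptions A1 and A3 and for any η > 0, for every nonempty bounded Borel set C ⊆ ℝ^d with positive Lebesgue measure there exist a constant ζ > 0 and a Borel probability measure ν on ℝ^d with ν(C) = 1 such that for every θ ∈ C and every Borel set A ⊆ ℝ^d, ℙ(θ − η(∇f(θ) + ξ_1(θ)) ∈ A) ≥ ζ ν(A). -/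
open MeasureTheory ProbabilityTheory Real NNReal ENNReal Filter Topology BoundedContinuousFunction

noncomputable section

/-- A Borel probability measure `μ` is stationary for the SGD chain: if `θ₀ ∼ μ` is independent
of the noise field `ξ₁`, then `θ₁ = θ₀ - η (∇f(θ₀) + ξ₁(θ₀))` again has law `μ`. -/
def SGDIsStationary {d : ℕ} {Ω : Type*} [MeasurableSpace Ω] (P : Measure Ω) (η : ℝ)
    (f' : EuclideanSpace ℝ (Fin d) → EuclideanSpace ℝ (Fin d))
    (ξ1 : Ω → EuclideanSpace ℝ (Fin d) → EuclideanSpace ℝ (Fin d))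
    (μ : Measure (EuclideanSpace ℝ (Fin d))) : Prop :=
  Measure.map (fun q : Ω × EuclideanSpace ℝ (Fin d) => q.2 - η • (f' q.2 + ξ1 q.1 q.2))
    (P.prod μ) = μ

/-- Corollary A.4 (minorization condition) for one step of constant step size SGD. -/
theorem sgd_minorization
    {d : ℕ} (hd : 1 ≤ d) {Ω : Type} [MeasurableSpace Ω] (P : Measure Ω) [IsProbabilityMeasure P]
    (f : EuclideanSpace ℝ (Fin d) → ℝ)
    (f' : EuclideanSpace ℝ (Fin d) → EuclideanSpace ℝ (Fin d))
    (hf : ∀ θ, HasGradientAt f (f' θ) θ)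
    (ξ1 : Ω → EuclideanSpace ℝ (Fin d) → EuclideanSpace ℝ (Fin d))
    (hξmeas : Measurable (Function.uncurry ξ1))
    (L : ℝ) (hL : 0 ≤ L)
    (hA1 : ∀ θ, ‖f' θ‖ ≤ L * (1 + ‖θ‖))
    (Lξ : ℝ) (hLξ : 0 < Lξ)
    (hmean : ∀ θ, ∫ ω, ξ1 ω θ ∂P = 0)
    (hmom2 : ∀ θ, ∫ ω, ‖ξ1 ω θ‖ ^ 2 ∂P ≤ Lξ * (1 + ‖θ‖ ^ 2))
    (p : EuclideanSpace ℝ (Fin d) → EuclideanSpace ℝ (Fin d) → ℝ)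
    (hp : NoiseDensityLB P ξ1 p)
    (η : ℝ) (hη0 : 0 < η) :
    ∀ C : Set (EuclideanSpace ℝ (Fin d)), C.Nonempty → Bornology.IsBounded C →
      MeasurableSet C → 0 < volume C →
      ∃ ζ : ℝ≥0, 0 < ζ ∧ ∃ ν : Measure (EuclideanSpace ℝ (Fin d)),
        IsProbabilityMeasure ν ∧ ν C = 1 ∧
        ∀ θ ∈ C, ∀ A : Set (EuclideanSpace ℝ (Fin d)), MeasurableSet A →
          (ζ : ℝ≥0∞) * ν A ≤ P {ω | θ - η • (f' θ + ξ1 ω θ) ∈ A} := by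
  intro C hCne hCb hCmeas hC0
  classical
  -- bound on C
  obtain ⟨M, hM⟩ := (Metric.isBounded_iff_subset_closedBall 0).mp hCb
  have hMnorm : ∀ x ∈ C, ‖x‖ ≤ M := fun x hx => by
    simpa [Metric.mem_closedBall, dist_eq_norm] using hM hx
  have hM0 : 0 ≤ M := le_trans (norm_nonneg _) (hMnorm _ hCne.choose_spec)
  set R : ℝ := η⁻¹ * (M + M) + L * (1 + M) with hR
  -- key geometric fact: preimages of C land in the ball of radius R
  have hkey : ∀ θ ∈ C, ∀ t : EuclideanSpace ℝ (Fin d),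
      θ - η • (f' θ + t) ∈ C → ‖t‖ ≤ R := by
    intro θ hθ t ht
    set c := θ - η • (f' θ + t) with hc
    have hteq : t = η⁻¹ • (θ - c) - f' θ := by
      rw [hc]; match_scalars <;> field_simp <;> ring
    have h1 : ‖t‖ ≤ η⁻¹ * (‖θ‖ + ‖c‖) + ‖f' θ‖ := by
      rw [hteq]
      refine le_trans (norm_sub_le _ _) ?_
      gcongr
      rw [norm_smul, Real.norm_eq_abs, abs_of_pos (inv_pos.2 hη0)]
      gcongr
      exact norm_sub_le _ _
    have h2 : ‖f' θ‖ ≤ L * (1 + M) := by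
      refine le_trans (hA1 θ) ?_
      gcongr
      exact hMnorm θ hθ
    calc ‖t‖ ≤ η⁻¹ * (‖θ‖ + ‖c‖) + ‖f' θ‖ := h1
      _ ≤ η⁻¹ * (M + M) + L * (1 + M) := by
        gcongr
        · exact hMnorm θ hθ
        · exact hMnorm c ht
  -- ε from the density lower bound
  obtain ⟨ε, hε0, hεlb⟩ := hp.2.2.2 C (Metric.closedBall 0 R) hCb Metric.isBounded_closedBall
  -- facts about volume C
  have hCfin : volume C ≠ ⊤ := hCb.measure_lt_top.ne
  have hC0' : volume C ≠ 0 := hC0.ne'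
  -- the measure ν
  set ν : Measure (EuclideanSpace ℝ (Fin d)) := (volume C)⁻¹ • volume.restrict C with hν
  have hνapp : ∀ A : Set (EuclideanSpace ℝ (Fin d)), MeasurableSet A →
      ν A = (volume C)⁻¹ * volume (A ∩ C) := by
    intro A hA
    rw [hν, Measure.smul_apply, Measure.restrict_apply hA, smul_eq_mul]
  have hνprob : IsProbabilityMeasure ν := by
    constructor
    rw [hνapp _ MeasurableSet.univ, Set.univ_inter]
    exact ENNReal.inv_mul_cancel hC0' hCfin
  have hνC : ν C = 1 := by
    rw [hνapp _ hCmeas, Set.inter_self]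
    exact ENNReal.inv_mul_cancel hC0' hCfin
  -- the constant ζ
  set Z : ℝ≥0∞ := ENNReal.ofReal ε * volume C * (ENNReal.ofReal η ^ d)⁻¹ with hZ
  have hηd0 : (ENNReal.ofReal η ^ d : ℝ≥0∞) ≠ 0 :=
    pow_ne_zero _ (ENNReal.ofReal_pos.2 hη0).ne'
  have hηdtop : (ENNReal.ofReal η ^ d : ℝ≥0∞) ≠ ⊤ :=
    ENNReal.pow_ne_top ENNReal.ofReal_ne_top
  have hZ0 : Z ≠ 0 := by
    rw [hZ]
    refine mul_ne_zero (mul_ne_zero ?_ hC0') ?_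
    · exact (ENNReal.ofReal_pos.2 hε0).ne'
    · exact ENNReal.inv_ne_zero.2 hηdtop
  have hZtop : Z ≠ ⊤ := by
    rw [hZ]
    exact ENNReal.mul_ne_top (ENNReal.mul_ne_top ENNReal.ofReal_ne_top hCfin)
      (ENNReal.inv_ne_top.2 hηd0)
  refine ⟨Z.toNNReal, ENNReal.toNNReal_pos hZ0 hZtop, ν, hνprob, hνC, ?_⟩
  intro θ hθ A hA
  have hζcoe : ((Z.toNNReal : ℝ≥0) : ℝ≥0∞) = Z := ENNReal.coe_toNNReal hZtop
  -- measurability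
  have hmθ : Measurable fun ω => ξ1 ω θ :=
    hξmeas.comp (measurable_prodMk_right)
  set b : EuclideanSpace ℝ (Fin d) := θ - η • f' θ with hb
  set T : EuclideanSpace ℝ (Fin d) → EuclideanSpace ℝ (Fin d) :=
    fun t => b + (-η) • t with hT
  have hTeq : ∀ x : EuclideanSpace ℝ (Fin d), θ - η • (f' θ + x) = T x := by
    intro x; rw [hT, hb]; module
  have hTmeas : Measurable T := (measurable_id.const_smul (-η)).const_add b
  have hpθ : Measurable fun t => ENNReal.ofReal (p θ t) :=
    ENNReal.measurable_ofReal.comp (hp.1.comp measurable_prodMk_left)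
  -- volume of the preimage
  have hvolpre : ∀ S : Set (EuclideanSpace ℝ (Fin d)),
      volume (T ⁻¹' S) = (ENNReal.ofReal η ^ d)⁻¹ * volume S := by
    intro S
    have h1 : T ⁻¹' S = (fun t : EuclideanSpace ℝ (Fin d) => (-η) • t) ⁻¹' ((b + ·) ⁻¹' S) := rfl
    rw [h1, MeasureTheory.Measure.addHaar_preimage_smul volume (neg_ne_zero.2 hη0.ne'),
      measure_preimage_add, finrank_euclideanSpace_fin]
    congr 1
    rw [abs_inv, abs_pow, abs_neg, abs_of_pos hη0,
      ← ENNReal.ofReal_pow hη0.le, ENNReal.ofReal_inv_of_pos (pow_pos hη0 d)]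
  -- the main chain of inequalities
  have hsetmeas : MeasurableSet (T ⁻¹' A) := hTmeas hA
  have hsub : T ⁻¹' (A ∩ C) ⊆ T ⁻¹' A := Set.preimage_mono Set.inter_subset_left
  have hlow : ∀ t ∈ T ⁻¹' (A ∩ C), ENNReal.ofReal ε ≤ ENNReal.ofReal (p θ t) := by
    intro t ht
    refine ENNReal.ofReal_le_ofReal ?_
    refine hεlb θ hθ t ?_
    have hTC : θ - η • (f' θ + t) ∈ C := by rw [hTeq]; exact ht.2
    simpa [Metric.mem_closedBall, dist_eq_norm] using hkey θ hθ t hTC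
  calc ((Z.toNNReal : ℝ≥0) : ℝ≥0∞) * ν A
      = ENNReal.ofReal ε * (ENNReal.ofReal η ^ d)⁻¹ * volume (A ∩ C)
        * (volume C * (volume C)⁻¹) := by
        rw [hζcoe, hνapp A hA, hZ]; ring
    _ = ENNReal.ofReal ε * ((ENNReal.ofReal η ^ d)⁻¹ * volume (A ∩ C)) := by
        rw [ENNReal.mul_inv_cancel hC0' hCfin, mul_one, mul_assoc]
    _ = ENNReal.ofReal ε * volume (T ⁻¹' (A ∩ C)) := by rw [hvolpre]
    _ = ∫⁻ t in T ⁻¹' (A ∩ C), ENNReal.ofReal ε ∂volume := (setLIntegral_const _ _).symm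
    _ ≤ ∫⁻ t in T ⁻¹' (A ∩ C), ENNReal.ofReal (p θ t) ∂volume :=
        setLIntegral_mono hpθ hlow
    _ ≤ ∫⁻ t in T ⁻¹' A, ENNReal.ofReal (p θ t) ∂volume := lintegral_mono_set hsub
    _ = (volume.withDensity fun t => ENNReal.ofReal (p θ t)) (T ⁻¹' A) :=
        (withDensity_apply _ hsetmeas).symm
    _ ≤ Measure.map (fun ω => ξ1 ω θ) P (T ⁻¹' A) :=
        Measure.le_iff'.1 (hp.2.2.1 θ) _
    _ = P ((fun ω => ξ1 ω θ) ⁻¹' (T ⁻¹' A)) := Measure.map_apply hmθ hsetmeas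
    _ = P {ω | θ - η • (f' θ + ξ1 ω θ) ∈ A} := by
        congr 1
        ext ω
        simp only [Set.mem_preimage, Set.mem_setOf_eq, hTeq]
end
end

section
/- Dissipativity around a critical point: let f : ℝ^d → ℝ be differentiable with ‖∇f(θ)‖ ≤ L(1+‖θ‖) for all θ (some L ≥ 0) and ⟨θ, ∇f(θ)⟩ ≥ α‖θ‖² − β for all θ (some α, β > 0). Then for every critical point θ* of f (∇f(θ*) = 0) and all θ ∈ ℝ^d: ⟨∇f(θ), θ − θ*⟩ ≥ (α/2)‖θ − θ*‖² − β', where β' := β + (√α + 2L/√α)² ‖θ*‖² + L‖θ*‖. -/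
open Real

/-- Lemma A.7: a dissipative function with linearly growing gradient is dissipative around any
of its critical points. -/
theorem dissipativity_around_critical_point
    {d : ℕ} (f : EuclideanSpace ℝ (Fin d) → ℝ)
    (f' : EuclideanSpace ℝ (Fin d) → EuclideanSpace ℝ (Fin d))
    (hf : ∀ θ, HasGradientAt f (f' θ) θ)
    (L : ℝ) (hL : 0 ≤ L)
    (hA1 : ∀ θ, ‖f' θ‖ ≤ L * (1 + ‖θ‖))
    (α β : ℝ) (hα : 0 < α) (hβ : 0 < β)
    (hA2 : ∀ θ, α * ‖θ‖ ^ 2 - β ≤ (inner ℝ θ (f' θ) : ℝ))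
    (θstar : EuclideanSpace ℝ (Fin d)) (hcrit : f' θstar = 0) :
    ∀ θ : EuclideanSpace ℝ (Fin d),
      (α / 2) * ‖θ - θstar‖ ^ 2 -
          (β + (Real.sqrt α + 2 * L / Real.sqrt α) ^ 2 * ‖θstar‖ ^ 2 + L * ‖θstar‖) ≤
        (inner ℝ (f' θ) (θ - θstar) : ℝ) := by
  intro θ
  have hs : Real.sqrt α ^ 2 = α := Real.sq_sqrt hα.le
  have hs0 : 0 < Real.sqrt α := Real.sqrt_pos.2 hα
  have hC : (Real.sqrt α + 2 * L / Real.sqrt α) ^ 2 = α + 4 * L + 4 * L ^ 2 / α := by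
    field_simp
    rw [hs]; ring
  have hexp : (inner ℝ (f' θ) (θ - θstar) : ℝ) =
      (inner ℝ (f' θ) θ : ℝ) - (inner ℝ (f' θ) θstar : ℝ) := inner_sub_right _ _ _
  have hsym : (inner ℝ (f' θ) θ : ℝ) = (inner ℝ θ (f' θ) : ℝ) := real_inner_comm _ _
  have h2 := hA2 θ
  have hcs : |(inner ℝ (f' θ) θstar : ℝ)| ≤ ‖f' θ‖ * ‖θstar‖ := abs_real_inner_le_norm _ _
  have h1 := hA1 θ
  have hns : 0 ≤ ‖θstar‖ := norm_nonneg _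
  have hn : 0 ≤ ‖θ‖ := norm_nonneg _
  have hbound : (inner ℝ (f' θ) θstar : ℝ) ≤ L * (1 + ‖θ‖) * ‖θstar‖ := by
    calc (inner ℝ (f' θ) θstar : ℝ) ≤ |(inner ℝ (f' θ) θstar : ℝ)| := le_abs_self _
    _ ≤ ‖f' θ‖ * ‖θstar‖ := hcs
    _ ≤ L * (1 + ‖θ‖) * ‖θstar‖ := by nlinarith
  have hnorm : ‖θ - θstar‖ ^ 2 = ‖θ‖ ^ 2 - 2 * (inner ℝ θ θstar : ℝ) + ‖θstar‖ ^ 2 :=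
    norm_sub_sq_real _ _
  have hcs2 : -(‖θ‖ * ‖θstar‖) ≤ (inner ℝ θ θstar : ℝ) := neg_abs_le _ |>.trans' (by
    have := abs_real_inner_le_norm θ θstar
    linarith [neg_abs_le (inner ℝ θ θstar : ℝ)])
  rw [hexp, hsym, hC] at *
  have key : 0 ≤ α / 2 * ‖θ‖ ^ 2 - (L + α) * ‖θ‖ * ‖θstar‖ +
      (α / 2 + 4 * L + 4 * L ^ 2 / α) * ‖θstar‖ ^ 2 := by
    have hid : α / 2 * ‖θ‖ ^ 2 - (L + α) * ‖θ‖ * ‖θstar‖ +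
        (α / 2 + 4 * L + 4 * L ^ 2 / α) * ‖θstar‖ ^ 2 =
        ((α * ‖θ‖ - (L + α) * ‖θstar‖) ^ 2 + (6 * L * α + 7 * L ^ 2) * ‖θstar‖ ^ 2) /
          (2 * α) := by
      field_simp
      ring
    rw [hid]
    positivity
  have hmono := mul_le_mul_of_nonneg_left hcs2 hα.le
  nlinarith [key, h2, hbound, hnorm, hcs2, hmono, mul_nonneg hL hns]
end

section
/- Polyak–Łojasiewicz-type inequality for a non-convex example: fix λ > 0 and define f : ℝ^d → ℝ by f(θ) = (1/2) log(1 + ‖θ‖²) + (λ/2)‖θ‖². Then θ* = 0 is the global minimizer of f, the gradient satisfies ‖∇f(θ)‖² = ‖θ‖² (λ + 1/(1+‖θ‖²))², and for all θ ∈ ℝ^d: ‖∇f(θ)‖² ≥ (2λ²/(1+λ)) (f(θ) − f(0)). -/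
open Real

/-- Polyak–Łojasiewicz-type inequality for the simplified non-convex regularized heavy-tailed
MLE objective `f(θ) = (1/2) log(1+‖θ‖²) + (λ/2)‖θ‖²`. -/
theorem simplified_heavy_tailed_mle_PL
    {d : ℕ} (lam : ℝ) (hlam : 0 < lam) :
    let f : EuclideanSpace ℝ (Fin d) → ℝ := fun θ =>
      (1 / 2) * Real.log (1 + ‖θ‖ ^ 2) + lam / 2 * ‖θ‖ ^ 2
    let G : EuclideanSpace ℝ (Fin d) → EuclideanSpace ℝ (Fin d) := fun θ =>
      (lam + 1 / (1 + ‖θ‖ ^ 2)) • θ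
    (∀ θ : EuclideanSpace ℝ (Fin d), θ ≠ 0 → f 0 < f θ) ∧
    (∀ θ, HasGradientAt f (G θ) θ) ∧
    (∀ θ : EuclideanSpace ℝ (Fin d),
      ‖G θ‖ ^ 2 = ‖θ‖ ^ 2 * (lam + 1 / (1 + ‖θ‖ ^ 2)) ^ 2) ∧
    (∀ θ : EuclideanSpace ℝ (Fin d),
      (2 * lam ^ 2 / (1 + lam)) * (f θ - f 0) ≤ ‖G θ‖ ^ 2) := by
  intro f G
  have hf0 : f 0 = 0 := by simp [f]
  have hpos : ∀ θ : EuclideanSpace ℝ (Fin d), (0:ℝ) < 1 + ‖θ‖ ^ 2 := fun θ => by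
    positivity
  refine ⟨?_, ?_, ?_, ?_⟩
  · intro θ hθ
    have hs : 0 < ‖θ‖ ^ 2 := by
      have := norm_pos_iff.mpr hθ
      positivity
    have hlog : 0 < Real.log (1 + ‖θ‖ ^ 2) := Real.log_pos (by linarith)
    rw [hf0]
    have : 0 < (1 / 2) * Real.log (1 + ‖θ‖ ^ 2) + lam / 2 * ‖θ‖ ^ 2 := by positivity
    simpa [f] using this
  · intro θ
    rw [hasGradientAt_iff_hasFDerivAt]
    have h1 : HasFDerivAt (fun x : EuclideanSpace ℝ (Fin d) => ‖x‖ ^ 2)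
        (2 • (innerSL ℝ θ)) θ := (hasStrictFDerivAt_norm_sq θ).hasFDerivAt
    have h2 : HasFDerivAt (fun x : EuclideanSpace ℝ (Fin d) => 1 + ‖x‖ ^ 2)
        (2 • (innerSL ℝ θ)) θ := h1.const_add 1
    have h3 := h2.log (ne_of_gt (hpos θ))
    have h4 := (h3.const_mul (1/2 : ℝ)).add (h1.const_mul (lam / 2))
    convert h4 using 1
    rotate_left 3
    all_goals try rfl
    ext y
    simp only [InnerProductSpace.toDual_apply_apply, ContinuousLinearMap.add_apply,
      ContinuousLinearMap.smul_apply, ContinuousLinearMap.coe_smul', Pi.smul_apply,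
      innerSL_apply_apply, real_inner_smul_left, smul_eq_mul, G]
    have h5 : (1 + ‖θ‖ ^ 2) ≠ 0 := ne_of_gt (hpos θ)
    field_simp
    ring
  · intro θ
    have h5 : (0:ℝ) < lam + 1 / (1 + ‖θ‖ ^ 2) := by
      have := hpos θ
      positivity
    simp only [G, norm_smul, Real.norm_eq_abs, abs_of_pos h5]
    ring
  · intro θ
    have hs : 0 ≤ ‖θ‖ ^ 2 := by positivity
    have h1s := hpos θ
    have hlog : Real.log (1 + ‖θ‖ ^ 2) ≤ ‖θ‖ ^ 2 := by
      have := Real.log_le_sub_one_of_pos h1s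
      linarith
    have hG : ‖G θ‖ ^ 2 = ‖θ‖ ^ 2 * (lam + 1 / (1 + ‖θ‖ ^ 2)) ^ 2 := by
      have h5 : (0:ℝ) < lam + 1 / (1 + ‖θ‖ ^ 2) := by positivity
      simp only [G, norm_smul, Real.norm_eq_abs, abs_of_pos h5]
      ring
    rw [hG, hf0]
    have hinv : (0:ℝ) < 1 / (1 + ‖θ‖ ^ 2) := by positivity
    have key1 : lam ^ 2 * ‖θ‖ ^ 2 ≤ ‖θ‖ ^ 2 * (lam + 1 / (1 + ‖θ‖ ^ 2)) ^ 2 := by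
      nlinarith [mul_nonneg (mul_nonneg hs hlam.le) hinv.le, mul_nonneg hs (sq_nonneg (1 / (1 + ‖θ‖ ^ 2)))]
    have key2 : (2 * lam ^ 2 / (1 + lam)) * (f θ - 0) ≤ lam ^ 2 * ‖θ‖ ^ 2 := by
      simp only [f, sub_zero]
      rw [div_mul_eq_mul_div, div_le_iff₀ (by linarith : (0:ℝ) < 1 + lam)]
      nlinarith
    linarith
end
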